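/- arXiv:1805.02873 — 6 statements merged into one kernel-verified Lean document; each statement's English description precedes it below -/
import Mathlib

section
/- Every irreducible homogeneous polynomial invariant curve f of a homogeneous planar vector field F_n = X_h + μ D divides h, where h = (x Q_n − y P_n)/(n+1). -/
open MvPolynomial

private lemma finsupp_degree_two (d : Fin 2 →₀ ℕ) : Finsupp.degree d = d 0 + d 1 := by
  rw [Finsupp.degree_apply, Finset.sum_subset (Finset.subset_univ _)
    (fun i _ hi => Finsupp.notMem_support_iff.mp hi), Fin.sum_univ_two]

private lemma X_mul_pderiv_monomial (i : Fin 2) (d : Fin 2 →₀ ℕ) (a : ℂ) :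
    X i * pderiv i (monomial d a) = C ((d i : ℂ)) * monomial d a := by
  rw [pderiv_monomial, C_mul_monomial]
  rcases Nat.eq_zero_or_pos (d i) with h0 | hpos
  · simp [h0]
  · have hdd : d - Finsupp.single i 1 + Finsupp.single i 1 = d :=
      tsub_add_cancel_of_le (Finsupp.single_le_iff.mpr hpos)
    rw [X, monomial_mul, one_mul, mul_comm a, add_comm, hdd]

private lemma euler_two {s : ℕ} {f : MvPolynomial (Fin 2) ℂ} (hf : f.IsHomogeneous s) :
    X 0 * pderiv 0 f + X 1 * pderiv 1 f = C ((s : ℂ)) * f := by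
  conv_lhs => rw [f.as_sum]
  conv_rhs => rw [f.as_sum]
  rw [map_sum (pderiv 0), map_sum (pderiv 1), Finset.mul_sum, Finset.mul_sum, Finset.mul_sum,
    ← Finset.sum_add_distrib]
  refine Finset.sum_congr rfl fun d hd => ?_
  rw [X_mul_pderiv_monomial, X_mul_pderiv_monomial, ← add_mul, ← C_add]
  have hw := hf (mem_support_iff.mp hd)
  have hds : d 0 + d 1 = s := by
    rw [← finsupp_degree_two d, Finsupp.degree_eq_weight_one]; exact hw
  congr 2
  exact_mod_cast hds

/-- Every irreducible homogeneous polynomial invariant curve `f` of a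
homogeneous planar vector field `F_n = X_h + μ D` of degree `n` divides `h`,
where `h = (xQ_n − yP_n)/(n+1)` is homogeneous of degree `n+1`. -/
theorem stmt4 (n s : ℕ) (h μ f K : MvPolynomial (Fin 2) ℂ)
    (hh : h.IsHomogeneous (n + 1))
    (hfirr : Irreducible f) (hfhom : f.IsHomogeneous s)
    (hinv : (-pderiv 1 h + μ * X 0) * pderiv 0 f + (pderiv 0 h + μ * X 1) * pderiv 1 f = K * f) :
    f ∣ h := by
  have hf0 : f ≠ 0 := hfirr.ne_zero
  have euf := euler_two hfhom
  have euh := euler_two hh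
  have hprime : Prime f := UniqueFactorizationMonoid.irreducible_iff_prime.mp hfirr
  have hn1 : IsUnit (C (((n + 1 : ℕ) : ℂ)) : MvPolynomial (Fin 2) ℂ) :=
    (isUnit_iff_ne_zero.mpr (by exact_mod_cast Nat.succ_ne_zero n)).map
      (C : ℂ →+* MvPolynomial (Fin 2) ℂ)
  have d1 : f ∣ h * pderiv 0 f := by
    rw [← hn1.dvd_mul_left]
    refine ⟨C ((s : ℂ)) * pderiv 0 h - (K - C ((s : ℂ)) * μ) * X 1, ?_⟩
    linear_combination (pderiv 0 h + μ * X 1) * euf - pderiv 0 f * euh - X 1 * hinv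
  have d2 : f ∣ h * pderiv 1 f := by
    rw [← hn1.dvd_mul_left]
    refine ⟨C ((s : ℂ)) * pderiv 1 h + (K - C ((s : ℂ)) * μ) * X 0, ?_⟩
    linear_combination (pderiv 1 h - μ * X 0) * euf - pderiv 1 f * euh + X 0 * hinv
  rcases hprime.dvd_mul.mp d1 with hfh | hfx
  · exact hfh
  rcases hprime.dvd_mul.mp d2 with hfh | hfy
  · exact hfh
  exfalso
  obtain ⟨a, ha⟩ := hfx
  obtain ⟨b, hb⟩ := hfy
  have key : f * C ((s : ℂ)) = f * (X 0 * a + X 1 * b) := by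
    rw [mul_comm f (C ((s : ℂ))), ← euf, ha, hb]; ring
  have hs : (C ((s : ℂ)) : MvPolynomial (Fin 2) ℂ) = X 0 * a + X 1 * b :=
    mul_left_cancel₀ hf0 key
  have hs0 : (s : ℂ) = 0 := by
    have := congrArg constantCoeff hs
    simpa using this
  have hs' : s = 0 := by exact_mod_cast hs0
  subst hs'
  have hfc : f = C (coeff 0 f) := by
    ext d
    rcases eq_or_ne d 0 with rfl | hd
    · simp [coeff_C]
    · rw [coeff_C, if_neg (fun hh' => hd hh'.symm)]
      exact hfhom.coeff_eq_zero (by rwa [Ne, Finsupp.degree_eq_zero_iff])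
  have hc0 : coeff 0 f ≠ 0 := fun hc => hf0 (by rw [hfc, hc, map_zero])
  exact hfirr.not_isUnit
    (hfc ▸ (isUnit_iff_ne_zero.mpr hc0).map (C : ℂ →+* MvPolynomial (Fin 2) ℂ))
end

section
/- Suppose the quadratic Lotka–Volterra vector field F₂(x,y) = (x(a₁x + a₂y), y(b₁x + b₂y)) with a₁b₂(a₂b₁ − a₁b₂) ≠ 0 satisfies a₁ = b₁. Then F₂ has no nonzero polynomial first integral. (Indeed any candidate first integral would be of the form x^{n₁} y^{n₂}, forcing n₁a₁ + n₂b₁ = 0 and n₁a₂ + n₂b₂ = 0, hence n₁ = n₂ = 0.) -/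
open MvPolynomial

lemma my_coeff_pderiv {σ : Type*} [DecidableEq σ] (i : σ) (d : σ →₀ ℕ) (p : MvPolynomial σ ℂ) :
    coeff d (pderiv i p) = ((d i : ℂ) + 1) * coeff (d + Finsupp.single i 1) p := by
  induction p using MvPolynomial.induction_on' with
  | add p q hp hq => simp [hp, hq, mul_add]
  | monomial s a =>
    rw [pderiv_monomial, coeff_monomial, coeff_monomial]
    by_cases h : s = d + Finsupp.single i 1
    · subst h
      rw [if_pos (by simp), if_pos rfl]
      push_cast [Finsupp.add_apply, Finsupp.single_eq_same]
      ring
    · rw [if_neg h]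
      by_cases h2 : s - Finsupp.single i 1 = d
      · rw [if_pos h2]
        have hsi : s i = 0 := by
          by_contra hsi
          have hle : Finsupp.single i 1 ≤ s := by
            rw [Finsupp.single_le_iff]; omega
          exact h (by rw [← h2, tsub_add_cancel_of_le hle])
        simp [hsi]
      · rw [if_neg h2, mul_zero]

lemma my_coeff_X_mul_zero {σ : Type*} [DecidableEq σ] (i : σ) (d : σ →₀ ℕ)
    (p : MvPolynomial σ ℂ) (h : d i = 0) : coeff d (X i * p) = 0 := by
  rw [coeff_X_mul', if_neg]
  simp [Finsupp.mem_support_iff, h]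

/-- abbreviation for the exponent vector (m, n) -/
noncomputable def dd (m n : ℕ) : Fin 2 →₀ ℕ := Finsupp.single 0 m + Finsupp.single 1 n

lemma dd_apply0 (m n : ℕ) : dd m n 0 = m := by
  simp [dd, Finsupp.add_apply, Finsupp.single_apply]

lemma dd_apply1 (m n : ℕ) : dd m n 1 = n := by
  simp [dd, Finsupp.add_apply, Finsupp.single_apply]

lemma dd_succ_left (m n : ℕ) : dd (m + 1) n = Finsupp.single 0 1 + dd m n := by
  simp only [dd, Finsupp.single_add]; abel

lemma dd_succ_right (m n : ℕ) : dd m (n + 1) = Finsupp.single 1 1 + dd m n := by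
  simp only [dd, Finsupp.single_add]; abel

lemma dd_add_single0 (m n : ℕ) : dd m n + Finsupp.single 0 1 = dd (m + 1) n := by
  rw [dd_succ_left]; abel

lemma dd_add_single1 (m n : ℕ) : dd m n + Finsupp.single 1 1 = dd m (n + 1) := by
  rw [dd_succ_right]; abel

/-- If `F₂(x,y) = (x(a₁x+a₂y), y(b₁x+b₂y))` with `a₁ ≠ 0`, `b₂ ≠ 0`,
`a₂b₁ − a₁b₂ ≠ 0` and `a₁ = b₁`, then `F₂` has no nonzero polynomial first
integral vanishing at the origin. -/
theorem stmt6 (a₁ a₂ b₁ b₂ : ℂ) (ha₁ : a₁ ≠ 0) (hb₂ : b₂ ≠ 0)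
    (hdet : a₂ * b₁ - a₁ * b₂ ≠ 0) (hab : a₁ = b₁) :
    ∀ I : MvPolynomial (Fin 2) ℂ, constantCoeff I = 0 →
      (X 0 * (C a₁ * X 0 + C a₂ * X 1)) * pderiv 0 I +
      (X 1 * (C b₁ * X 0 + C b₂ * X 1)) * pderiv 1 I = 0 →
      I = 0 := by
  intro I h0 hpde
  set P := pderiv (0 : Fin 2) I with hP
  set Q := pderiv (1 : Fin 2) I with hQ
  have hpde' : C a₁ * (X 0 * (X 0 * P)) + C a₂ * (X 0 * (X 1 * P)) +
      (C b₁ * (X 1 * (X 0 * Q)) + C b₂ * (X 1 * (X 1 * Q))) = 0 := by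
    rw [← hpde]; ring
  have key : ∀ d : Fin 2 →₀ ℕ,
      a₁ * coeff d (X 0 * (X 0 * P)) + a₂ * coeff d (X 0 * (X 1 * P)) +
      (b₁ * coeff d (X 1 * (X 0 * Q)) + b₂ * coeff d (X 1 * (X 1 * Q))) = 0 := by
    intro d
    have := congrArg (coeff d) hpde'
    simpa [coeff_add, coeff_C_mul] using this
  set c : ℕ → ℕ → ℂ := fun m n => coeff (dd m n) I with hc
  have hPc : ∀ m n, coeff (dd m n) P = ((m : ℂ) + 1) * c (m + 1) n := by
    intro m n
    rw [hP, my_coeff_pderiv, dd_apply0, dd_add_single0]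
  have hQc : ∀ m n, coeff (dd m n) Q = ((n : ℂ) + 1) * c m (n + 1) := by
    intro m n
    rw [hQ, my_coeff_pderiv, dd_apply1, dd_add_single1]
  have strip0 : ∀ (m n : ℕ) (p : MvPolynomial (Fin 2) ℂ),
      coeff (dd (m + 1) n) (X 0 * p) = coeff (dd m n) p := by
    intro m n p; rw [dd_succ_left, coeff_X_mul]
  have strip1 : ∀ (m n : ℕ) (p : MvPolynomial (Fin 2) ℂ),
      coeff (dd m (n + 1)) (X 1 * p) = coeff (dd m n) p := by
    intro m n p; rw [dd_succ_right, coeff_X_mul]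
  have zero0 : ∀ (n : ℕ) (p : MvPolynomial (Fin 2) ℂ),
      coeff (dd 0 n) (X 0 * p) = 0 := fun n p =>
    my_coeff_X_mul_zero _ _ _ (dd_apply0 0 n)
  have zero1 : ∀ (m : ℕ) (p : MvPolynomial (Fin 2) ℂ),
      coeff (dd m 0) (X 1 * p) = 0 := fun m p =>
    my_coeff_X_mul_zero _ _ _ (dd_apply1 m 0)
  -- base case: c m 0 = 0 for all m
  have base : ∀ m, c m 0 = 0 := by
    intro m
    match m with
    | 0 =>
      have hdd : dd 0 0 = 0 := by simp [dd]
      rw [hc]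
      simp only [hdd]
      exact h0
    | m + 1 =>
      have hk := key (dd (m + 2) 0)
      rw [strip0, strip0, hPc, strip0, zero1, zero1, zero1] at hk
      simp only [mul_zero, add_zero, zero_add] at hk
      have hm : ((m : ℂ) + 1) ≠ 0 := Nat.cast_add_one_ne_zero m
      rcases mul_eq_zero.mp hk with h | h
      · exact absurd h ha₁
      rcases mul_eq_zero.mp h with h2 | h2
      · exact absurd h2 hm
      · exact h2
  -- inductive step
  have step : ∀ n, (∀ m, c m n = 0) → ∀ m, c m (n + 1) = 0 := by
    intro n ih m
    have hk := key (dd (m + 1) (n + 1))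
    have hb2term : coeff (dd (m + 1) n) (X 1 * Q) = 0 := by
      match n with
      | 0 => exact zero1 _ _
      | n + 1 => rw [strip1, hQc, ih]; ring
    have ha1term : coeff (dd m (n + 1)) (X 0 * P) = (m : ℂ) * c m (n + 1) := by
      match m with
      | 0 => rw [zero0]; simp
      | m + 1 => rw [strip0, hPc]; push_cast; ring
    rw [strip0 m (n + 1) (X 0 * P), ha1term,
        strip0 m (n + 1) (X 1 * P), strip1 m n P, hPc m n, ih,
        strip1 (m + 1) n (X 0 * Q), strip0 m n Q, hQc m n,
        strip1 (m + 1) n (X 1 * Q), hb2term] at hk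
    simp only [mul_zero, add_zero, zero_add] at hk
    have hk2 : (((m : ℂ) + (n : ℂ) + 1) * a₁) * c m (n + 1) = 0 := by
      linear_combination hk + ((n : ℂ) + 1) * c m (n + 1) * hab
    have hmn : ((m : ℂ) + (n : ℂ) + 1) ≠ 0 := by
      have h3 : ((m + n : ℕ) : ℂ) + 1 ≠ 0 := Nat.cast_add_one_ne_zero _
      push_cast at h3
      intro h4; exact h3 (by linear_combination h4)
    rcases mul_eq_zero.mp hk2 with h | h
    · rcases mul_eq_zero.mp h with h2 | h2
      · exact absurd h2 hmn
      · exact absurd h2 ha₁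
    · exact h
  have all : ∀ n m, c m n = 0 := by
    intro n
    induction n with
    | zero => exact base
    | succ n ih => exact step n ih
  ext d
  have hd : d = dd (d 0) (d 1) := by
    ext j
    fin_cases j
    · exact (dd_apply0 (d 0) (d 1)).symm
    · exact (dd_apply1 (d 0) (d 1)).symm
  rw [coeff_zero, hd]
  exact all (d 1) (d 0)
end

section
/- Let F₂(x,y) = (x(a₁x + a₂y), y(b₁x + b₂y)) with a₁, b₂, a₂b₁−a₁b₂, b₁−a₁, b₂−a₂ all nonzero, and suppose I = x^{ps} y^{qs} ((b₁−a₁)x + (b₂−a₂)y)^{rs} is a first integral of F₂ for natural numbers p,q,r,s ≥ 1. Then (p+r)a₁ + q b₁ = 0 and (q+r)b₂ + p a₂ = 0, i.e. a₂ = −b₂(q+r)/p and b₁ = −a₁(p+r)/q. -/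
open MvPolynomial

set_option maxHeartbeats 2000000

/-- If `I = x^{ps} y^{qs} ((b₁−a₁)x + (b₂−a₂)y)^{rs}` is a first integral of
`F₂ = (x(a₁x+a₂y), y(b₁x+b₂y))` (with `a₁, b₂, a₂b₁−a₁b₂, b₁−a₁, b₂−a₂` all
nonzero and `p,q,r,s ≥ 1`), then `(p+r)a₁ + q b₁ = 0` and
`(q+r)b₂ + p a₂ = 0`. -/
theorem stmt7 (a₁ a₂ b₁ b₂ : ℂ) (p q r s : ℕ)
    (ha₁ : a₁ ≠ 0) (hb₂ : b₂ ≠ 0) (hdet : a₂ * b₁ - a₁ * b₂ ≠ 0)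
    (h1 : b₁ - a₁ ≠ 0) (h2 : b₂ - a₂ ≠ 0)
    (hp : 1 ≤ p) (hq : 1 ≤ q) (hr : 1 ≤ r) (hs : 1 ≤ s)
    (hint :
      (X 0 * (C a₁ * X 0 + C a₂ * X 1)) *
          pderiv 0 (X 0 ^ (p * s) * X 1 ^ (q * s) * (C (b₁ - a₁) * X 0 + C (b₂ - a₂) * X 1) ^ (r * s)) +
      (X 1 * (C b₁ * X 0 + C b₂ * X 1)) *
          pderiv 1 (X 0 ^ (p * s) * X 1 ^ (q * s) * (C (b₁ - a₁) * X 0 + C (b₂ - a₂) * X 1) ^ (r * s))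
        = (0 : MvPolynomial (Fin 2) ℂ)) :
    ((p : ℂ) + r) * a₁ + q * b₁ = 0 ∧ ((q : ℂ) + r) * b₂ + p * a₂ = 0 := by
  obtain ⟨A, hA⟩ : ∃ A, p * s = A + 1 := ⟨p * s - 1, (Nat.succ_pred_eq_of_pos (by positivity)).symm⟩
  obtain ⟨B, hB⟩ : ∃ B, q * s = B + 1 := ⟨q * s - 1, (Nat.succ_pred_eq_of_pos (by positivity)).symm⟩
  obtain ⟨D, hD⟩ : ∃ D, r * s = D + 1 := ⟨r * s - 1, (Nat.succ_pred_eq_of_pos (by positivity)).symm⟩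
  set L : MvPolynomial (Fin 2) ℂ := C (b₁ - a₁) * X 0 + C (b₂ - a₂) * X 1 with hL
  set α : ℂ := ((A:ℂ) + 1 + (D + 1)) * a₁ + (B + 1) * b₁ with hα
  set β : ℂ := ((A:ℂ) + 1) * a₂ + ((B:ℂ) + 1 + (D + 1)) * b₂ with hβ
  have key :
      (X 0 * (C a₁ * X 0 + C a₂ * X 1)) *
          pderiv 0 (X 0 ^ (p * s) * X 1 ^ (q * s) * L ^ (r * s)) +
      (X 1 * (C b₁ * X 0 + C b₂ * X 1)) *
          pderiv 1 (X 0 ^ (p * s) * X 1 ^ (q * s) * L ^ (r * s))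
        = X 0 ^ (A + 1) * X 1 ^ (B + 1) * L ^ (D + 1) * (C α * X 0 + C β * X 1) := by
    rw [hA, hB, hD]
    simp only [pderiv_mul, pderiv_pow, pderiv_X_self, pderiv_X_of_ne (by decide : (0:Fin 2) ≠ 1),
      pderiv_X_of_ne (by decide : (1:Fin 2) ≠ 0), map_add, map_mul, pderiv_C, hL, hα, hβ,
      map_one, map_natCast, map_ofNat, C_add, C_mul]
    simp only [C_sub]
    push_cast
    ring
  rw [key] at hint
  have hX0 : (X 0 : MvPolynomial (Fin 2) ℂ) ^ (A + 1) ≠ 0 := pow_ne_zero _ (X_ne_zero 0)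
  have hX1 : (X 1 : MvPolynomial (Fin 2) ℂ) ^ (B + 1) ≠ 0 := pow_ne_zero _ (X_ne_zero 1)
  have hLne : L ^ (D + 1) ≠ 0 := by
    apply pow_ne_zero
    intro h
    have := congrArg (coeff (Finsupp.single 0 1)) h
    simp [hL, coeff_X', C_sub, sub_mul, coeff_sub, coeff_C_mul, sub_eq_zero,
      Finsupp.single_eq_single_iff] at this
    exact h1 (sub_eq_zero.mpr this)
  have hlin : (C α * X 0 + C β * X 1 : MvPolynomial (Fin 2) ℂ) = 0 := by
    rcases mul_eq_zero.1 hint with h | h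
    · rcases mul_eq_zero.1 h with h' | h'
      · rcases mul_eq_zero.1 h' with h'' | h''
        · exact absurd h'' hX0
        · exact absurd h'' hX1
      · exact absurd h' hLne
    · exact h
  have hα0 : α = 0 := by
    have := congrArg (coeff (Finsupp.single 0 1)) hlin
    simpa [coeff_X', Finsupp.single_eq_single_iff] using this
  have hβ0 : β = 0 := by
    have := congrArg (coeff (Finsupp.single 1 1)) hlin
    simpa [coeff_X', Finsupp.single_eq_single_iff] using this
  have hsC : (s : ℂ) ≠ 0 := Nat.cast_ne_zero.mpr (by omega)
  constructor
  · have h' : (s:ℂ) * (((p : ℂ) + r) * a₁ + q * b₁) = 0 := by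
      rw [hα, show ((A:ℂ)+1) = (p*s : ℕ) by push_cast [hA]; ring,
        show ((D:ℂ)+1) = (r*s : ℕ) by push_cast [hD]; ring,
        show ((B:ℂ)+1) = (q*s : ℕ) by push_cast [hB]; ring] at hα0
      push_cast at hα0 ⊢
      linear_combination hα0
    exact (mul_eq_zero.1 h').resolve_left hsC
  · have h' : (s:ℂ) * (((q : ℂ) + r) * b₂ + p * a₂) = 0 := by
      rw [hβ, show ((A:ℂ)+1) = (p*s : ℕ) by push_cast [hA]; ring,
        show ((D:ℂ)+1) = (r*s : ℕ) by push_cast [hD]; ring,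
        show ((B:ℂ)+1) = (q*s : ℕ) by push_cast [hB]; ring] at hβ0
      push_cast at hβ0 ⊢
      linear_combination hβ0
    exact (mul_eq_zero.1 h').resolve_left hsC
end

section
/- For F₂ = (x(-qx+(q+r)y), y((p+r)x-py)) with p,q,r positive integers and any k ∈ ℕ, the operator ℓ_{k+3}^c : span{x^{k+2}, x^{k+1}y, y^{k+2}} → span{x^{k+3}, x^{k+2}y, y^{k+3}} defined by projecting (F₂ − (3/(k+3))μD)(g) modulo h·(homogeneous polynomials of degree k) has determinant ((k+2)³/(k+3)³)(q+qk+p+r)(q+p+rk+r)(p+pk+q+r) ≠ 0, hence is bijective. -/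
open MvPolynomial Matrix Finset

set_option maxHeartbeats 2000000 in
/-- For `F₂ = (x(-qx+(q+r)y), y((p+r)x-py))` with `p,q,r` positive and any
`k ∈ ℕ`, the operator `ℓ_{k+3}^c : ⟨x^{k+2}, x^{k+1}y, y^{k+2}⟩ →
⟨x^{k+3}, x^{k+2}y, y^{k+3}⟩`, obtained from
`g ↦ (F₂ − (3/(k+3))μD)(g)` by projecting modulo `h·𝒫_k`
(`h = ((p+q+r)/3) xy(x−y)`, `μ = (1/3)((−2q+p+r)x + (q+r−2p)y)`), is
represented by a matrix `M` of determinant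
`((k+2)³/(k+3)³)(q+qk+p+r)(q+p+rk+r)(p+pk+q+r) ≠ 0`; hence it is bijective. -/
theorem stmt8 (p q r k : ℕ) (hp : 1 ≤ p) (hq : 1 ≤ q) (hr : 1 ≤ r) :
    let x : MvPolynomial (Fin 2) ℂ := X 0
    let y : MvPolynomial (Fin 2) ℂ := X 1
    let P : MvPolynomial (Fin 2) ℂ := x * (-(q : MvPolynomial (Fin 2) ℂ) * x + ((q : MvPolynomial (Fin 2) ℂ) + r) * y)
    let Q : MvPolynomial (Fin 2) ℂ := y * (((p : MvPolynomial (Fin 2) ℂ) + r) * x - (p : MvPolynomial (Fin 2) ℂ) * y)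
    let μ : MvPolynomial (Fin 2) ℂ := C ((1 : ℂ) / 3) * ((C ((-2 : ℂ) * q + p + r)) * x + (C ((q : ℂ) + r - 2 * p)) * y)
    let h : MvPolynomial (Fin 2) ℂ := C (((p : ℂ) + q + r) / 3) * (x * y * (x - y))
    let G : MvPolynomial (Fin 2) ℂ → MvPolynomial (Fin 2) ℂ := fun g =>
      P * pderiv 0 g + Q * pderiv 1 g -
        C (3 / ((k : ℂ) + 3)) * μ * (x * pderiv 0 g + y * pderiv 1 g)
    ∃ M : Matrix (Fin 3) (Fin 3) ℂ,
      (∀ v : Fin 3 → ℂ, ∃ w : MvPolynomial (Fin 2) ℂ, w.IsHomogeneous k ∧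
        G (C (v 0) * x ^ (k + 2) + C (v 1) * x ^ (k + 1) * y + C (v 2) * y ^ (k + 2)) =
          C (M.mulVec v 0) * x ^ (k + 3) + C (M.mulVec v 1) * x ^ (k + 2) * y +
            C (M.mulVec v 2) * y ^ (k + 3) + h * w) ∧
      M.det = (((k : ℂ) + 2) ^ 3 / ((k : ℂ) + 3) ^ 3) *
        ((q : ℂ) + q * k + p + r) * ((q : ℂ) + p + r * k + r) * ((p : ℂ) + p * k + q + r) ∧
      M.det ≠ 0 := by
  intro x y P Q μ h G
  have hk3 : ((k:ℂ)+3) ≠ 0 := by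
    have : ((k+3:ℕ):ℂ) ≠ 0 := Nat.cast_ne_zero.mpr (by omega)
    push_cast at this; exact this
  have hσ : ((p:ℂ)+(q:ℂ)+(r:ℂ)) ≠ 0 := by
    have : ((p+q+r:ℕ):ℂ) ≠ 0 := Nat.cast_ne_zero.mpr (by omega)
    push_cast at this; exact this
  have hσ3 : (((p:ℂ)+(q:ℂ)+(r:ℂ))/3) ≠ 0 := by
    apply div_ne_zero hσ; norm_num
  have hdet : (!![(-(q:ℂ)*((k:ℂ)+2) - ((k:ℂ)+2)*(3/((k:ℂ)+3))*((1:ℂ)/3)*((-2:ℂ)*(q:ℂ) + (p:ℂ) + (r:ℂ))), 0, 0; (((q:ℂ)+(r:ℂ))*((k:ℂ)+2) - ((k:ℂ)+2)*(3/((k:ℂ)+3))*((1:ℂ)/3)*((q:ℂ) + (r:ℂ) - 2*(p:ℂ))), ((r:ℂ)*((k:ℂ)+2) - ((k:ℂ)+2)*(3/((k:ℂ)+3))*((1:ℂ)/3)*(2*(r:ℂ) - (p:ℂ) - (q:ℂ))), (((p:ℂ)+(r:ℂ))*((k:ℂ)+2) - ((k:ℂ)+2)*(3/((k:ℂ)+3))*((1:ℂ)/3)*((-2:ℂ)*(q:ℂ)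 + (p:ℂ) + (r:ℂ))); 0, 0, (-(p:ℂ)*((k:ℂ)+2) - ((k:ℂ)+2)*(3/((k:ℂ)+3))*((1:ℂ)/3)*((q:ℂ) + (r:ℂ) - 2*(p:ℂ)))] : Matrix (Fin 3) (Fin 3) ℂ).det
      = (((k : ℂ) + 2) ^ 3 / ((k : ℂ) + 3) ^ 3) *
        ((q : ℂ) + q * k + p + r) * ((q : ℂ) + p + r * k + r) * ((p : ℂ) + p * k + q + r) := by
    simp [Matrix.det_fin_three]
    field_simp
    ring
  refine ⟨!![(-(q:ℂ)*((k:ℂ)+2) - ((k:ℂ)+2)*(3/((k:ℂ)+3))*((1:ℂ)/3)*((-2:ℂ)*(q:ℂ) + (p:ℂ) + (r:ℂ))), 0, 0; (((q:ℂ)+(r:ℂ))*((k:ℂ)+2) - ((k:ℂ)+2)*(3/((k:ℂ)+3))*((1:ℂ)/3)*((q:ℂ) + (r:ℂ) - 2*(p:ℂ))), ((r:ℂ)*((k:ℂ)+2) - ((k:ℂ)+2)*(3/((k:ℂ)+3))*((1:ℂ)/3)*(2*(r:ℂ) - (p:ℂ) - (q:ℂ))), (((p:ℂ)+(r:ℂ))*((k:ℂ)+2)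 - ((k:ℂ)+2)*(3/((k:ℂ)+3))*((1:ℂ)/3)*((-2:ℂ)*(q:ℂ) + (p:ℂ) + (r:ℂ))); 0, 0, (-(p:ℂ)*((k:ℂ)+2) - ((k:ℂ)+2)*(3/((k:ℂ)+3))*((1:ℂ)/3)*((q:ℂ) + (r:ℂ) - 2*(p:ℂ)))], fun v => ?_, hdet, ?_⟩
  · -- the matrix identity
    have hv0 : (!![(-(q:ℂ)*((k:ℂ)+2) - ((k:ℂ)+2)*(3/((k:ℂ)+3))*((1:ℂ)/3)*((-2:ℂ)*(q:ℂ) + (p:ℂ) + (r:ℂ))), 0, 0; (((q:ℂ)+(r:ℂ))*((k:ℂ)+2) - ((k:ℂ)+2)*(3/((k:ℂ)+3))*((1:ℂ)/3)*((q:ℂ) + (r:ℂ) - 2*(p:ℂ))), ((r:ℂ)*((k:ℂ)+2) - ((k:ℂ)+2)*(3/((k:ℂ)+3))*((1:ℂ)/3)*(2*(r:ℂ) - (p:ℂ) - (q:ℂ))), (((p:ℂ)+(r:ℂ))*((k:ℂ)+2) - ((k:ℂ)+2)*(3/((k:ℂ)+3))*((1:ℂ)/3)*((-2:ℂ)*(q:ℂ)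 + (p:ℂ) + (r:ℂ))); 0, 0, (-(p:ℂ)*((k:ℂ)+2) - ((k:ℂ)+2)*(3/((k:ℂ)+3))*((1:ℂ)/3)*((q:ℂ) + (r:ℂ) - 2*(p:ℂ)))] : Matrix (Fin 3) (Fin 3) ℂ).mulVec v 0 = (-(q:ℂ)*((k:ℂ)+2) - ((k:ℂ)+2)*(3/((k:ℂ)+3))*((1:ℂ)/3)*((-2:ℂ)*(q:ℂ) + (p:ℂ) + (r:ℂ))) * v 0 := by
      simp [Matrix.mulVec, dotProduct, Fin.sum_univ_three]
    have hv1 : (!![(-(q:ℂ)*((k:ℂ)+2) - ((k:ℂ)+2)*(3/((k:ℂ)+3))*((1:ℂ)/3)*((-2:ℂ)*(q:ℂ) + (p:ℂ) + (r:ℂ))), 0, 0; (((q:ℂ)+(r:ℂ))*((k:ℂ)+2) - ((k:ℂ)+2)*(3/((k:ℂ)+3))*((1:ℂ)/3)*((q:ℂ) + (r:ℂ) - 2*(p:ℂ))), ((r:ℂ)*((k:ℂ)+2) - ((k:ℂ)+2)*(3/((k:ℂ)+3))*((1:ℂ)/3)*(2*(r:ℂ) - (p:ℂ) - (q:ℂ))),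 (((p:ℂ)+(r:ℂ))*((k:ℂ)+2) - ((k:ℂ)+2)*(3/((k:ℂ)+3))*((1:ℂ)/3)*((-2:ℂ)*(q:ℂ) + (p:ℂ) + (r:ℂ))); 0, 0, (-(p:ℂ)*((k:ℂ)+2) - ((k:ℂ)+2)*(3/((k:ℂ)+3))*((1:ℂ)/3)*((q:ℂ) + (r:ℂ) - 2*(p:ℂ)))] : Matrix (Fin 3) (Fin 3) ℂ).mulVec v 1
        = (((q:ℂ)+(r:ℂ))*((k:ℂ)+2) - ((k:ℂ)+2)*(3/((k:ℂ)+3))*((1:ℂ)/3)*((q:ℂ) + (r:ℂ) - 2*(p:ℂ))) * v 0 + ((r:ℂ)*((k:ℂ)+2) - ((k:ℂ)+2)*(3/((k:ℂ)+3))*((1:ℂ)/3)*(2*(r:ℂ) - (p:ℂ) - (q:ℂ))) * v 1 + (((p:ℂ)+(r:ℂ))*((k:ℂ)+2) - ((k:ℂ)+2)*(3/((k:ℂ)+3))*((1:ℂ)/3)*((-2:ℂ)*(q:ℂ) + (p:ℂ) + (r:ℂ))) * v 2 := by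
      simp [Matrix.mulVec, dotProduct, Fin.sum_univ_three]
    have hv2 : (!![(-(q:ℂ)*((k:ℂ)+2) - ((k:ℂ)+2)*(3/((k:ℂ)+3))*((1:ℂ)/3)*((-2:ℂ)*(q:ℂ) + (p:ℂ) + (r:ℂ))), 0, 0; (((q:ℂ)+(r:ℂ))*((k:ℂ)+2) - ((k:ℂ)+2)*(3/((k:ℂ)+3))*((1:ℂ)/3)*((q:ℂ) + (r:ℂ) - 2*(p:ℂ))), ((r:ℂ)*((k:ℂ)+2) - ((k:ℂ)+2)*(3/((k:ℂ)+3))*((1:ℂ)/3)*(2*(r:ℂ) - (p:ℂ) - (q:ℂ))), (((p:ℂ)+(r:ℂ))*((k:ℂ)+2) - ((k:ℂ)+2)*(3/((k:ℂ)+3))*((1:ℂ)/3)*((-2:ℂ)*(q:ℂ) + (p:ℂ) + (r:ℂ))); 0, 0, (-(p:ℂ)*((k:ℂ)+2) - ((k:ℂ)+2)*(3/((k:ℂ)+3))*((1:ℂ)/3)*((q:ℂ) + (r:ℂ) - 2*(p:ℂ)))] : Matrix (Fin 3) (Fin 3) ℂ).mulVec v 2 = (-(p:ℂ)*((k:ℂ)+2)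 - ((k:ℂ)+2)*(3/((k:ℂ)+3))*((1:ℂ)/3)*((q:ℂ) + (r:ℂ) - 2*(p:ℂ))) * v 2 := by
      simp [Matrix.mulVec, dotProduct, Fin.sum_univ_three]
    have key : ((X 0 : MvPolynomial (Fin 2) ℂ) * X 1 * (X 0 - X 1)) *
        (∑ i ∈ Finset.range (k+1), X 0 ^ i * X 1 ^ (k - i)) =
        X 0 ^ (k+2) * X 1 - X 0 * X 1 ^ (k+2) := by
      have h2 := geom_sum₂_mul (X 0 : MvPolynomial (Fin 2) ℂ) (X 1) (k+1)
      simp only [Nat.add_sub_cancel] at h2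
      linear_combination (X 0 * X 1 : MvPolynomial (Fin 2) ℂ) * h2
    have hAB1 : (C (((p:ℂ)+(q:ℂ)+(r:ℂ))/3) * C (-(v 1 * (((q:ℂ)+(r:ℂ))*((k:ℂ)+1) - (p:ℂ) - ((k:ℂ)+2)*(3/((k:ℂ)+3))*((1:ℂ)/3)*((q:ℂ) + (r:ℂ) - 2*(p:ℂ)))) / (((p:ℂ)+(q:ℂ)+(r:ℂ))/3)) : MvPolynomial (Fin 2) ℂ) = C (-(v 1 * (((q:ℂ)+(r:ℂ))*((k:ℂ)+1) - (p:ℂ) - ((k:ℂ)+2)*(3/((k:ℂ)+3))*((1:ℂ)/3)*((q:ℂ) + (r:ℂ) - 2*(p:ℂ))))) := by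
      rw [← MvPolynomial.C_mul]; congr 1; field_simp
    have hAB2 : (C (((p:ℂ)+(q:ℂ)+(r:ℂ))/3) * C (-(v 2 * (((p:ℂ)+(r:ℂ))*((k:ℂ)+2) - ((k:ℂ)+2)*(3/((k:ℂ)+3))*((1:ℂ)/3)*((-2:ℂ)*(q:ℂ) + (p:ℂ) + (r:ℂ)))) / (((p:ℂ)+(q:ℂ)+(r:ℂ))/3)) : MvPolynomial (Fin 2) ℂ) = C (-(v 2 * (((p:ℂ)+(r:ℂ))*((k:ℂ)+2) - ((k:ℂ)+2)*(3/((k:ℂ)+3))*((1:ℂ)/3)*((-2:ℂ)*(q:ℂ) + (p:ℂ) + (r:ℂ))))) := by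
      rw [← MvPolynomial.C_mul]; congr 1; field_simp
    have d0 : pderiv (0 : Fin 2) (C (v 0) * X 0 ^ (k + 2) + C (v 1) * X 0 ^ (k + 1) * X 1
          + C (v 2) * X 1 ^ (k + 2) : MvPolynomial (Fin 2) ℂ)
        = C (v 0) * (((k+2 : ℕ) : MvPolynomial (Fin 2) ℂ) * X 0 ^ (k + 1)) + C (v 1) * (((k+1 : ℕ) : MvPolynomial (Fin 2) ℂ) * X 0 ^ k) * X 1 := by
      simp [pderiv_mul, pderiv_pow, pderiv_X]
      try ring
    have d1 : pderiv (1 : Fin 2) (C (v 0) * X 0 ^ (k + 2) + C (v 1) * X 0 ^ (k + 1) * X 1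
          + C (v 2) * X 1 ^ (k + 2) : MvPolynomial (Fin 2) ℂ)
        = C (v 1) * X 0 ^ (k + 1) + C (v 2) * (((k+2 : ℕ) : MvPolynomial (Fin 2) ℂ) * X 1 ^ (k + 1)) := by
      simp [pderiv_mul, pderiv_pow, pderiv_X]
      try ring
    refine ⟨C (-(v 1 * (((q:ℂ)+(r:ℂ))*((k:ℂ)+1) - (p:ℂ) - ((k:ℂ)+2)*(3/((k:ℂ)+3))*((1:ℂ)/3)*((q:ℂ) + (r:ℂ) - 2*(p:ℂ)))) / (((p:ℂ)+(q:ℂ)+(r:ℂ))/3)) * X 0 ^ k +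
      C (-(v 2 * (((p:ℂ)+(r:ℂ))*((k:ℂ)+2) - ((k:ℂ)+2)*(3/((k:ℂ)+3))*((1:ℂ)/3)*((-2:ℂ)*(q:ℂ) + (p:ℂ) + (r:ℂ)))) / (((p:ℂ)+(q:ℂ)+(r:ℂ))/3)) * ∑ i ∈ Finset.range (k+1), X 0 ^ i * X 1 ^ (k - i), ?_, ?_⟩
    · -- homogeneity
      apply MvPolynomial.IsHomogeneous.add
      · have h1 := (MvPolynomial.isHomogeneous_C (Fin 2) (-(v 1 * (((q:ℂ)+(r:ℂ))*((k:ℂ)+1) - (p:ℂ) - ((k:ℂ)+2)*(3/((k:ℂ)+3))*((1:ℂ)/3)*((q:ℂ) + (r:ℂ) - 2*(p:ℂ)))) / (((p:ℂ)+(q:ℂ)+(r:ℂ))/3))).mul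
          ((MvPolynomial.isHomogeneous_X ℂ (0 : Fin 2)).pow k)
        simpa using h1
      · have h2 : (∑ i ∈ Finset.range (k+1), (X 0 : MvPolynomial (Fin 2) ℂ) ^ i * X 1 ^ (k - i)).IsHomogeneous k := by
          apply MvPolynomial.IsHomogeneous.sum
          intro i hi
          have hik : i ≤ k := Nat.lt_succ_iff.mp (Finset.mem_range.mp hi)
          have h3 := ((MvPolynomial.isHomogeneous_X ℂ (0 : Fin 2)).pow i).mul
            ((MvPolynomial.isHomogeneous_X ℂ (1 : Fin 2)).pow (k - i))
          rwa [one_mul, one_mul, Nat.add_sub_cancel' hik] at h3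
        have h1 := (MvPolynomial.isHomogeneous_C (Fin 2) (-(v 2 * (((p:ℂ)+(r:ℂ))*((k:ℂ)+2) - ((k:ℂ)+2)*(3/((k:ℂ)+3))*((1:ℂ)/3)*((-2:ℂ)*(q:ℂ) + (p:ℂ) + (r:ℂ)))) / (((p:ℂ)+(q:ℂ)+(r:ℂ))/3))).mul h2
        simpa using h1
    · -- the big identity
      unfold G P Q μ h x y
      beta_reduce
      rw [d0, d1, hv0, hv1, hv2]
      push_cast
      linear_combination (norm := (push_cast [_root_.map_mul, map_add, map_sub, map_neg, map_ofNat, map_natCast, _root_.map_one]; ring1)) (-(X 0 * X 1 * (X 0 - X 1) * X 0 ^ k) : MvPolynomial (Fin 2) ℂ) * hAB1 -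
        (X 0 ^ (k+2) * X 1 - X 0 * X 1 ^ (k+2) : MvPolynomial (Fin 2) ℂ) * hAB2 -
        (C (((p:ℂ)+(q:ℂ)+(r:ℂ))/3) * C (-(v 2 * (((p:ℂ)+(r:ℂ))*((k:ℂ)+2) - ((k:ℂ)+2)*(3/((k:ℂ)+3))*((1:ℂ)/3)*((-2:ℂ)*(q:ℂ) + (p:ℂ) + (r:ℂ)))) / (((p:ℂ)+(q:ℂ)+(r:ℂ))/3)) : MvPolynomial (Fin 2) ℂ) * key
  · rw [hdet]
    have f1 : ((q:ℂ) + q * k + p + r) ≠ 0 := by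
      have : ((q + q*k + p + r:ℕ):ℂ) ≠ 0 := Nat.cast_ne_zero.mpr (by positivity)
      push_cast at this; exact this
    have f2 : ((q:ℂ) + p + r * k + r) ≠ 0 := by
      have : ((q + p + r*k + r:ℕ):ℂ) ≠ 0 := Nat.cast_ne_zero.mpr (by positivity)
      push_cast at this; exact this
    have f3 : ((p:ℂ) + p * k + q + r) ≠ 0 := by
      have : ((p + p*k + q + r:ℕ):ℂ) ≠ 0 := Nat.cast_ne_zero.mpr (by positivity)
      push_cast at this; exact this
    have f0 : (((k:ℂ)+2)^3 / ((k:ℂ)+3)^3) ≠ 0 := by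
      apply div_ne_zero (pow_ne_zero _ ?_) (pow_ne_zero _ hk3)
      have : ((k+2:ℕ):ℂ) ≠ 0 := Nat.cast_ne_zero.mpr (by omega)
      push_cast at this; exact this
    exact mul_ne_zero (mul_ne_zero (mul_ne_zero f0 f1) f2) f3
end

section
/- The irreducibility hypothesis in the previous divisibility lemma cannot be weakened to non-irreducible invariant curves: for F₂ = (−2x², −3x² − 2xy + 3y²) and the invariant curve (y−x)², the polynomial p₃ = x²(y−x) satisfies F₂(p₃) = 3x²(y−x)² ∈ ⟨(y−x)²⟩, yet p₃ ∉ ⟨(y−x)²⟩. -/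
open MvPolynomial

/-- Counterexample showing the irreducibility hypothesis cannot be dropped:
for `F₂ = (−2x², −3x²−2xy+3y²)`, the curve `(y−x)²` is invariant,
`F₂(x²(y−x)) = 3x²(y−x)² ∈ ⟨(y−x)²⟩`, and yet `(y−x)² ∤ x²(y−x)`. -/
theorem stmt10 :
    let x : MvPolynomial (Fin 2) ℂ := X 0
    let y : MvPolynomial (Fin 2) ℂ := X 1
    let P : MvPolynomial (Fin 2) ℂ := -2 * x ^ 2
    let Q : MvPolynomial (Fin 2) ℂ := -3 * x ^ 2 - 2 * x * y + 3 * y ^ 2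
    (∃ K : MvPolynomial (Fin 2) ℂ,
        P * pderiv 0 ((y - x) ^ 2) + Q * pderiv 1 ((y - x) ^ 2) = K * (y - x) ^ 2) ∧
    P * pderiv 0 (x ^ 2 * (y - x)) + Q * pderiv 1 (x ^ 2 * (y - x)) = 3 * x ^ 2 * (y - x) ^ 2 ∧
    ¬ (y - x) ^ 2 ∣ x ^ 2 * (y - x) := by
  intro x y P Q
  refine ⟨⟨2 * (3 * y + x), ?_⟩, ?_, ?_⟩
  · simp only [x, y, P, Q, map_sub, map_add, map_neg, pderiv_mul, pderiv_pow, pderiv_X_self,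
      pderiv_X_of_ne (by decide : (1 : Fin 2) ≠ 0), pderiv_X_of_ne (by decide : (0 : Fin 2) ≠ 1)]
    ring
  · simp only [x, y, P, Q, map_sub, map_add, map_neg, pderiv_mul, pderiv_pow, pderiv_X_self,
      pderiv_X_of_ne (by decide : (1 : Fin 2) ≠ 0), pderiv_X_of_ne (by decide : (0 : Fin 2) ≠ 1)]
    ring
  · rintro ⟨c, hc⟩
    have h := congrArg (aeval (fun i : Fin 2 => if i = 0 then (1 : Polynomial ℂ) else 1 + Polynomial.X)) hc
    simp only [x, y, map_mul, map_pow, map_sub, aeval_X] at h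
    norm_num at h
    have h1 := congrArg (fun p => Polynomial.coeff p 1) h
    rw [mul_comm] at h1
    simp [Polynomial.coeff_mul_X_pow'] at h1
end

section
/- For system (4) of Theorem 5: with a₀₂ = −5b₀₂, a₁₁ = −b₁₁, a₂₀ = −b₂₀/5, the polynomial I(x,y) = x y (3x − 3y − 3a₂₀x² + b₁₁xy + 3b₀₂y²)² is a first integral of the vector field F = (x(3y − x + a₂₀x² + a₁₁xy + a₀₂y²), y(3x − y + b₂₀x² + b₁₁xy + b₀₂y²)): F(I) = 0 identically. -/
open MvPolynomial

set_option maxHeartbeats 4000000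

/-- Case (4) of Theorem 5: if `a₀₂ + 5b₀₂ = 0`, `a₁₁ + b₁₁ = 0` and
`5a₂₀ + b₂₀ = 0`, then `I = xy(3x − 3y − 3a₂₀x² + b₁₁xy + 3b₀₂y²)²` is a
polynomial first integral of
`F = (x(3y − x + a₂₀x² + a₁₁xy + a₀₂y²), y(3x − y + b₂₀x² + b₁₁xy + b₀₂y²))`. -/
theorem stmt15 (a20 a11 a02 b20 b11 b02 : ℝ)
    (h1 : a02 + 5 * b02 = 0) (h2 : a11 + b11 = 0) (h3 : 5 * a20 + b20 = 0) :
    let x : MvPolynomial (Fin 2) ℝ := X 0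
    let y : MvPolynomial (Fin 2) ℝ := X 1
    let P : MvPolynomial (Fin 2) ℝ :=
      x * (3 * y - x + C a20 * x ^ 2 + C a11 * x * y + C a02 * y ^ 2)
    let Q : MvPolynomial (Fin 2) ℝ :=
      y * (3 * x - y + C b20 * x ^ 2 + C b11 * x * y + C b02 * y ^ 2)
    let I : MvPolynomial (Fin 2) ℝ :=
      x * y * (3 * x - 3 * y - 3 * C a20 * x ^ 2 + C b11 * x * y + 3 * C b02 * y ^ 2) ^ 2
    P * pderiv 0 I + Q * pderiv 1 I = 0 := by
  have ha02 : a02 = -5 * b02 := by linarith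
  have ha11 : a11 = -b11 := by linarith
  have hb20 : b20 = -5 * a20 := by linarith
  subst ha02 ha11 hb20
  intro x y P Q I
  simp only [P, Q, I, x, y]
  have h0 : (pderiv (R := ℝ) 0) (X (1 : Fin 2)) = 0 := by
    simp [pderiv_X]
  have h1 : (pderiv (R := ℝ) 1) (X (0 : Fin 2)) = 0 := by
    simp [pderiv_X]
  have h30 : (pderiv (R := ℝ) (0:Fin 2)) 3 = 0 := by
    rw [show (3 : MvPolynomial (Fin 2) ℝ) = C 3 by rw [map_ofNat], pderiv_C]
  have h31 : (pderiv (R := ℝ) (1:Fin 2)) 3 = 0 := by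
    rw [show (3 : MvPolynomial (Fin 2) ℝ) = C 3 by rw [map_ofNat], pderiv_C]
  simp only [map_add, map_sub, map_mul, map_pow, Derivation.leibniz, Derivation.leibniz_pow,
    pderiv_X_self, pderiv_C, h0, h1, h30, h31, map_neg, map_ofNat, smul_eq_mul, map_one]
  push_cast
  ring
end
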